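/- Let P be a finite, graded, bounded poset of rank n ≥ 1. Then (1+y)·ω(Ψ̃_P(a,b)) = (1-(-y)^n)·(a-b)^{n-1} + (1+y)·∑_{0̂ < w < 1̂} (a-b)^{rk(w)-1}·(b - (-y)^{rk(w)}·a)·ω(Ψ̃_{[w,1̂]}(a,b)). -/

import Mathlib

open Polynomial

noncomputable section

/-- The coefficient ring `ℤ[y]`. -/
abbrev NCR : Type := Polynomial ℤ

/-- The ring `ℤ[y]⟨a,b⟩` of noncommutative polynomials in the letters `a` (encoded `false`)
and `b` (encoded `true`) with coefficients in `ℤ[y]`. -/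
abbrev NCPoly : Type := MonoidAlgebra NCR (FreeMonoid Bool)

/-- The variable `a`. -/
def Aa : NCPoly := MonoidAlgebra.of NCR (FreeMonoid Bool) (FreeMonoid.of false)

/-- The variable `b`. -/
def Bb : NCPoly := MonoidAlgebra.of NCR (FreeMonoid Bool) (FreeMonoid.of true)

/-- The `ω`-transformation on a single `ab`-monomial (word in `a`,`b`): every occurrence of
the factor `ab` is replaced by `(1+y)ab + (y+y²)ba`, and then all remaining occurrences of `a`
are replaced by `a+yb` and of `b` by `b+ya`. -/
def omegaWord : List Bool → NCPoly
  | [] => 1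
  | false :: true :: rest =>
      (((1 + X : NCR)) • (Aa * Bb) + ((X + X ^ 2 : NCR)) • (Bb * Aa)) * omegaWord rest
  | false :: rest => (Aa + (X : NCR) • Bb) * omegaWord rest
  | true :: rest => (Bb + (X : NCR) • Aa) * omegaWord rest

/-- The `ω`-transformation on `ℤ[y]⟨a,b⟩`, extended linearly from `ab`-monomials. -/
def omega (f : NCPoly) : NCPoly :=
  (MonoidAlgebra.coeff f : FreeMonoid Bool →₀ NCR).sum fun w c => c • omegaWord (FreeMonoid.toList w)

/-- The `ι`-transformation on `ℤ[y]⟨a,b⟩`: it removes the initial letter from every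
`ab`-monomial (and kills the empty monomial). -/
def iota (f : NCPoly) : NCPoly :=
  (MonoidAlgebra.coeff f : FreeMonoid Bool →₀ NCR).sum fun w c =>
    match FreeMonoid.toList w with
    | [] => 0
    | _ :: rest => c • MonoidAlgebra.of NCR (FreeMonoid Bool) (FreeMonoid.ofList rest)

/-- `wt_S(a,b) = w_0 ⋯ w_{n-1}` where `w_k = b` if `k ∈ S` and `w_k = a - b` otherwise. -/
def wtS (n : ℕ) (S : Finset ℕ) : NCPoly :=
  ((List.range n).map fun j => if j ∈ S then Bb else Aa - Bb).prod

/-- Evaluation `f(y,a,b) ↦ f(-x,1,x)` used to define (augmented) Chow polynomials. -/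
def evalChow (f : NCPoly) : Polynomial ℤ :=
  (MonoidAlgebra.coeff f : FreeMonoid Bool →₀ NCR).sum fun w c =>
    c.comp (-X) * X ^ ((FreeMonoid.toList w).count true)

/-- The `ab`-monomial `m_T = m_0 ⋯ m_{n-1}` with `m_i = b` if `i ∈ T` and `m_i = a` else. -/
def mT (n : ℕ) (T : Finset ℕ) : FreeMonoid Bool :=
  FreeMonoid.ofList ((List.range n).map fun i => decide (i ∈ T))

variable {P : Type*} [Fintype P] [PartialOrder P]

open Classical in
/-- The Möbius function of a finite poset:
`μ(w,w) = 1` and `μ(u,w) = -∑_{u ≤ v < w} μ(u,v)` for `u ≠ w`. -/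
def mobius (u : P) : P → ℤ
  | w =>
    if u = w then 1
    else - ∑ v ∈ (Finset.univ.filter fun v : P => u ≤ v ∧ v < w).attach, mobius u v.1
  termination_by w => (Finset.univ.filter fun v : P => u ≤ v ∧ v ≤ w).card
  decreasing_by
    have hv := v.2
    simp only [Finset.mem_filter, Finset.mem_univ, true_and] at hv
    apply Finset.card_lt_card
    constructor
    · intro x hx
      simp only [Finset.mem_filter, Finset.mem_univ, true_and] at hx ⊢
      exact ⟨hx.1, hx.2.trans hv.2.le⟩
    · intro hsub
      have hw : w ∈ Finset.univ.filter fun v : P => u ≤ v ∧ v ≤ w := by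
        simp only [Finset.mem_filter, Finset.mem_univ, true_and]
        exact ⟨hv.1.trans hv.2.le, le_refl w⟩
      have := hsub hw
      simp only [Finset.mem_filter, Finset.mem_univ, true_and] at this
      exact absurd (lt_of_le_of_lt this.2 hv.2) (lt_irrefl w)

open Classical in
/-- The Poincaré polynomial of the interval `[u,w]`, with respect to the rank function `rk`:
`Poin_{[u,w]}(y) = ∑_{u ≤ v ≤ w} μ(u,v)·(-y)^{rk(v) - rk(u)}`. -/
def poin (rk : P → ℕ) (u w : P) : Polynomial ℤ :=
  ∑ v ∈ Finset.univ.filter fun v : P => u ≤ v ∧ v ≤ w,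
    mobius u v • (-X : Polynomial ℤ) ^ (rk v - rk u)

variable [BoundedOrder P]

open Classical in
/-- The extended `ab`-index of the interval `[u₀, ⊤]` of `P` (with ranks taken relative
to `u₀`): the sum over all chains `u₀ ≤ C_1 < ⋯ < C_k < C_{k+1} = ⊤` of
`Poin_{P,C}(y)·wt_C(a,b)`. -/
def exPsiFrom (rk : P → ℕ) (u₀ : P) : NCPoly :=
  ∑ k ∈ Finset.range (Fintype.card P),
    ∑ c ∈ Finset.univ.filter fun c : Fin (k + 1) → P =>
        StrictMono c ∧ c (Fin.last k) = (⊤ : P) ∧ u₀ ≤ c 0,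
      (∏ i : Fin k, poin rk (c i.castSucc) (c i.succ)) •
        wtS (rk (⊤ : P) - rk u₀) (Finset.univ.image fun i : Fin k => rk (c i.castSucc) - rk u₀)

open Classical in
/-- The `ab`-index of the interval `[u₀, ⊤]` of `P`: the sum over all chains
`u₀ ≤ C_1 < ⋯ < C_k < C_{k+1} = ⊤` of `wt_C(a,b)`. -/
def psiFrom (rk : P → ℕ) (u₀ : P) : NCPoly :=
  ∑ k ∈ Finset.range (Fintype.card P),
    ∑ c ∈ Finset.univ.filter fun c : Fin (k + 1) → P =>
        StrictMono c ∧ c (Fin.last k) = (⊤ : P) ∧ u₀ ≤ c 0,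
      wtS (rk (⊤ : P) - rk u₀) (Finset.univ.image fun i : Fin k => rk (c i.castSucc) - rk u₀)

/-- `exΨ̃ = ι(exΨ)` for the interval `[u₀, ⊤]`. -/
def exPsiTildeFrom (rk : P → ℕ) (u₀ : P) : NCPoly := iota (exPsiFrom rk u₀)

/-- `Ψ̃ = ι(Ψ)` for the interval `[u₀, ⊤]`. -/
def psiTildeFrom (rk : P → ℕ) (u₀ : P) : NCPoly := iota (psiFrom rk u₀)

open Classical in
/-- The flag `f`-vector `α(S)`: the number of maximal chains of the rank-selected subposet,
i.e. of chains `C_1 < ⋯ < C_k < C_{k+1} = ⊤` with `{rk(C_1), …, rk(C_k)} = S`. -/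
def flagAlpha (rk : P → ℕ) (S : Finset ℕ) : ℕ :=
  ∑ k ∈ Finset.range (Fintype.card P),
    (Finset.univ.filter fun c : Fin (k + 1) → P =>
      StrictMono c ∧ c (Fin.last k) = (⊤ : P) ∧
        (Finset.univ.image fun i : Fin k => rk (c i.castSucc)) = S).card

/-- The flag `h`-vector `β(T) = ∑_{S ⊆ T} (-1)^{|T∖S|} α(S)`. -/
def flagBeta (rk : P → ℕ) (T : Finset ℕ) : ℤ :=
  ∑ S ∈ T.powerset, (-1 : ℤ) ^ (T \ S).card * (flagAlpha rk S : ℤ)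

/-- An `R`-labeling of the graded poset `P`: every nontrivial interval `[u,w]` has a unique
maximal (i.e. saturated) chain with weakly increasing labels. -/
def IsRLabeling (rk : P → ℕ) (lab : P → P → ℤ) : Prop :=
  ∀ u w : P, u < w →
    ∃! c : Fin (rk w - rk u + 1) → P,
      c 0 = u ∧ c (Fin.last (rk w - rk u)) = w ∧
        (∀ i : Fin (rk w - rk u), c i.castSucc ⋖ c i.succ) ∧
        ∀ i j : Fin (rk w - rk u), i ≤ j →
          lab (c i.castSucc) (c i.succ) ≤ lab (c j.castSucc) (c j.succ)

/-- The label sequence `(λ_0, …, λ_n)` of a maximal chain `c` with sign-set `E`: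
`λ_0 = 0` and `λ_i = ±λ(c_{i-1}, c_i)`, negative exactly when `i ∈ E`. -/
def lamSeq {n : ℕ} (lab : P → P → ℤ) (c : Fin (n + 1) → P) (E : Finset ℕ) :
    Fin (n + 1) → ℤ :=
  fun j =>
    if j = 0 then 0
    else (if (j : ℕ) ∈ E then -1 else 1) * lab (c ⟨j.1 - 1, by omega⟩) (c j)

/-- The `ab`-monomial `m(M,E) = m_0 ⋯ m_{n-1}` with `m_i = b` if `λ_i > λ_{i+1}`
and `m_i = a` if `λ_i ≤ λ_{i+1}`. -/
def rlabWord {n : ℕ} (lab : P → P → ℤ) (c : Fin (n + 1) → P) (E : Finset ℕ) :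
    FreeMonoid Bool :=
  FreeMonoid.ofList
    (List.ofFn fun i : Fin n => decide (lamSeq lab c E i.succ < lamSeq lab c E i.castSucc))

end
noncomputable section Aux1

/-- `Q = (1+y)ab + (y+y²)ba`. -/
def Qel : NCPoly := ((1 + X : NCR)) • (Aa * Bb) + ((X + X ^ 2 : NCR)) • (Bb * Aa)

lemma omega_zero : omega (0 : NCPoly) = 0 := Finsupp.sum_zero_index

lemma omega_add (f g : NCPoly) : omega (f + g) = omega f + omega g :=
  Finsupp.sum_add_index' (fun _ => zero_smul _ _) (fun _ c d => add_smul c d _)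

/-- `omega` as an additive monoid hom. -/
def omegaHom : NCPoly →+ NCPoly := ⟨⟨omega, omega_zero⟩, omega_add⟩

lemma omega_eq_hom (f : NCPoly) : omega f = omegaHom f := rfl

lemma omega_sub (f g : NCPoly) : omega (f - g) = omega f - omega g := map_sub omegaHom f g

lemma omega_single (w : FreeMonoid Bool) (c : NCR) :
    omega (MonoidAlgebra.single w c) = c • omegaWord (FreeMonoid.toList w) :=
  Finsupp.sum_single_index (zero_smul _ _)

lemma iota_zero : iota (0 : NCPoly) = 0 := Finsupp.sum_zero_index

lemma iota_aux_zero (w : FreeMonoid Bool) :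
    (match FreeMonoid.toList w with
      | [] => (0 : NCPoly)
      | _ :: rest => (0:NCR) • MonoidAlgebra.of NCR (FreeMonoid Bool) (FreeMonoid.ofList rest)) = 0 := by
  rcases h : FreeMonoid.toList w with _ | ⟨x, l⟩ <;> simp

lemma iota_add (f g : NCPoly) : iota (f + g) = iota f + iota g := by
  refine Finsupp.sum_add_index' (fun w => iota_aux_zero w) (fun w c d => ?_)
  rcases h : FreeMonoid.toList w with _ | ⟨x, l⟩ <;> simp [add_smul]

/-- `iota` as an additive monoid hom. -/
def iotaHom : NCPoly →+ NCPoly := ⟨⟨iota, iota_zero⟩, iota_add⟩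

lemma iota_eq_hom (f : NCPoly) : iota f = iotaHom f := rfl

lemma iota_sub (f g : NCPoly) : iota (f - g) = iota f - iota g := map_sub iotaHom f g

lemma iota_single_cons (x : Bool) (l : List Bool) (c : NCR) :
    iota (MonoidAlgebra.single (FreeMonoid.ofList (x :: l)) c)
      = MonoidAlgebra.single (FreeMonoid.ofList l) c := by
  unfold iota
  rw [MonoidAlgebra.coeff_single]
  rw [Finsupp.sum_single_index (iota_aux_zero (FreeMonoid.ofList (x :: l)))]
  rw [FreeMonoid.toList_ofList]
  simp [MonoidAlgebra.of_apply, MonoidAlgebra.smul_single', mul_one]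

lemma iota_of_mul (x : Bool) (f : NCPoly) :
    iota (MonoidAlgebra.of NCR (FreeMonoid Bool) (FreeMonoid.of x) * f) = f := by
  induction f using MonoidAlgebra.induction_linear with
  | zero => rw [mul_zero, iota_zero]
  | add f g hf hg => rw [mul_add, iota_add, hf, hg]
  | single w c =>
      rw [MonoidAlgebra.of_apply, MonoidAlgebra.single_mul_single, one_mul]
      rw [show FreeMonoid.of x * w = FreeMonoid.ofList (x :: FreeMonoid.toList w) by
        rw [FreeMonoid.ofList_cons, FreeMonoid.ofList_toList]]
      rw [iota_single_cons, FreeMonoid.ofList_toList]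

lemma iota_Aa_mul (f : NCPoly) : iota (Aa * f) = f := iota_of_mul false f
lemma iota_Bb_mul (f : NCPoly) : iota (Bb * f) = f := iota_of_mul true f

lemma iota_AB_mul (f : NCPoly) : iota ((Aa - Bb) * f) = 0 := by
  rw [sub_mul, iota_sub, iota_Aa_mul, iota_Bb_mul, sub_self]

end Aux1
noncomputable section Aux2

lemma omegaWord_nil : omegaWord [] = 1 := rfl

lemma omegaWord_true (l : List Bool) :
    omegaWord (true :: l) = (Bb + (X : NCR) • Aa) * omegaWord l := by
  rw [omegaWord]

lemma omegaWord_ab (l : List Bool) :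
    omegaWord (false :: true :: l) = Qel * omegaWord l := by
  rw [omegaWord]; rfl

lemma omegaWord_aa (l : List Bool) :
    omegaWord (false :: false :: l) = (Aa + (X : NCR) • Bb) * omegaWord (false :: l) := by
  rw [omegaWord]; simp

lemma omegaWord_a : omegaWord [false] = Aa + (X : NCR) • Bb := by
  rw [omegaWord]; · rw [omegaWord_nil, mul_one]
  simp

lemma omega_one : omega (1 : NCPoly) = 1 := by
  rw [MonoidAlgebra.one_def, omega_single, FreeMonoid.toList_one, omegaWord_nil, one_smul]
  exact MonoidAlgebra.one_def.symm

lemma omega_Aa : omega Aa = Aa + (X : NCR) • Bb := by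
  rw [show Aa = MonoidAlgebra.single (FreeMonoid.of false) 1 from rfl, omega_single,
    FreeMonoid.toList_of, omegaWord_a, one_smul]; rfl

lemma omega_Bb_mul (f : NCPoly) : omega (Bb * f) = (Bb + (X : NCR) • Aa) * omega f := by
  induction f using MonoidAlgebra.induction_linear with
  | zero => simp [omega_zero]
  | add f g hf hg =>
      simp only [mul_add, omega_add, hf, hg]
      try rw [show omega (f + g) = omega f + omega g from omega_add f g, mul_add]
  | single w c =>
      rw [show Bb = MonoidAlgebra.single (FreeMonoid.of true) 1 from rfl,
        MonoidAlgebra.single_mul_single, one_mul, omega_single, omega_single,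
        FreeMonoid.toList_of_mul, omegaWord_true, mul_smul_comm]; rfl

lemma omega_AaBb_mul (f : NCPoly) : omega (Aa * (Bb * f)) = Qel * omega f := by
  induction f using MonoidAlgebra.induction_linear with
  | zero => simp [omega_zero]
  | add f g hf hg =>
      simp only [mul_add, omega_add, hf, hg]
      try rw [show omega (f + g) = omega f + omega g from omega_add f g, mul_add]
  | single w c =>
      rw [show Bb = MonoidAlgebra.single (FreeMonoid.of true) 1 from rfl,
        show Aa = MonoidAlgebra.single (FreeMonoid.of false) 1 from rfl,
        MonoidAlgebra.single_mul_single, one_mul, MonoidAlgebra.single_mul_single, one_mul,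
        omega_single, omega_single, FreeMonoid.toList_of_mul, FreeMonoid.toList_of_mul,
        omegaWord_ab, mul_smul_comm]

lemma omega_AaAa_mul (f : NCPoly) :
    omega (Aa * (Aa * f)) = (Aa + (X : NCR) • Bb) * omega (Aa * f) := by
  induction f using MonoidAlgebra.induction_linear with
  | zero => simp [omega_zero]
  | add f g hf hg =>
      simp only [mul_add, omega_add, hf, hg]
      try rw [show omega (f + g) = omega f + omega g from omega_add f g, mul_add]
  | single w c =>
      rw [show Aa = MonoidAlgebra.single (FreeMonoid.of false) 1 from rfl,
        MonoidAlgebra.single_mul_single, one_mul, MonoidAlgebra.single_mul_single, one_mul,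
        omega_single, omega_single, FreeMonoid.toList_of_mul, FreeMonoid.toList_of_mul,
        omegaWord_aa, mul_smul_comm]; rfl

end Aux2
noncomputable section Aux3

/-- `γ_k = 1 + (-y) + ⋯ + (-y)^k`. -/
def gam (k : ℕ) : NCR := ∑ i ∈ Finset.range (k + 1), (-X) ^ i

lemma gam_zero : gam 0 = 1 := by simp [gam]

lemma gam_succ (k : ℕ) : gam (k + 1) = gam k + (-X) ^ (k + 1) := Finset.sum_range_succ _ _

lemma one_add_X_mul_gam (k : ℕ) : (1 + X) * gam k = 1 - (-X) ^ (k + 1) := by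
  have := geom_sum_mul (-X : NCR) (k + 1)
  have h : (1 + X : NCR) = -(-X - 1) := by ring
  rw [gam, h, neg_mul, mul_comm, this, neg_sub]

/-- Key `ω`-lemma, `(a-b)^k` case, joint with its `a·(a-b)^k` variant. -/
theorem keyG (k : ℕ) :
    omega ((Aa - Bb) ^ k) = gam k • (Aa - Bb) ^ k ∧
    omega (Aa * (Aa - Bb) ^ k) =
      gam (k + 1) • (Aa - Bb) ^ (k + 1) + (Bb + (X : NCR) • Aa) * (gam k • (Aa - Bb) ^ k) := by
  induction k with
  | zero =>
      constructor
      · rw [pow_zero, omega_one, gam_zero, one_smul]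
      · rw [pow_zero, mul_one, omega_Aa, gam_zero, pow_one]
        rw [gam_succ, gam_zero]
        simp only [mul_add, add_mul, mul_sub, sub_mul, smul_mul_assoc, mul_smul_comm,
          smul_smul, smul_sub, smul_add, mul_assoc, mul_one, one_mul, pow_one]
        module
  | succ k ih =>
      have hz : (Aa - Bb) ^ (k + 1) = Aa * (Aa - Bb) ^ k - Bb * (Aa - Bb) ^ k := by
        rw [pow_succ', sub_mul]
      constructor
      · rw [hz, omega_sub, ih.2, omega_Bb_mul, ih.1, ← hz, add_sub_cancel_right]
      · rw [hz, mul_sub, omega_sub, omega_AaAa_mul, ih.2, omega_AaBb_mul, ih.1, ← hz]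
        simp only [gam_succ, pow_succ']
        generalize (Aa - Bb) ^ k = p
        generalize (-X : NCR) ^ k = e
        generalize gam k = g
        simp only [Qel, mul_add, add_mul, mul_sub, sub_mul, smul_mul_assoc, mul_smul_comm,
          smul_smul, smul_sub, smul_add, mul_assoc, mul_one, one_mul]
        module

end Aux3
noncomputable section Aux4

/-- Key `ω`-lemma: `ω((a-b)^k b f) = (a-b)^k (b - (-y)^{k+1} a) ω(f)`, joint with its
`a·(a-b)^k b f` variant. -/
theorem keyL (k : ℕ) (f : NCPoly) :
    omega ((Aa - Bb) ^ k * (Bb * f)) =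
      (Aa - Bb) ^ k * ((Bb - ((-X : NCR) ^ (k + 1)) • Aa) * omega f) ∧
    omega (Aa * ((Aa - Bb) ^ k * (Bb * f))) =
      ((Aa - Bb) ^ (k + 1) * (Bb - ((-X : NCR) ^ (k + 2)) • Aa)
        + (Bb + (X : NCR) • Aa) * ((Aa - Bb) ^ k * (Bb - ((-X : NCR) ^ (k + 1)) • Aa))) * omega f := by
  induction k with
  | zero =>
      constructor
      · rw [pow_zero, one_mul, omega_Bb_mul, one_mul]
        simp only [mul_add, add_mul, mul_sub, sub_mul, smul_mul_assoc, mul_smul_comm,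
          smul_smul, smul_sub, smul_add, mul_assoc, mul_one, one_mul, pow_one, zero_add]
        module
      · rw [pow_zero, one_mul, omega_AaBb_mul]
        simp only [Qel, mul_add, add_mul, mul_sub, sub_mul, smul_mul_assoc, mul_smul_comm,
          smul_smul, smul_sub, smul_add, mul_assoc, mul_one, one_mul, pow_one, pow_zero, zero_add]
        module
  | succ k ih =>
      have hz : (Aa - Bb) ^ (k + 1) * (Bb * f)
          = Aa * ((Aa - Bb) ^ k * (Bb * f)) - Bb * ((Aa - Bb) ^ k * (Bb * f)) := by
        rw [pow_succ', mul_assoc, sub_mul]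
      constructor
      · rw [hz, omega_sub, ih.2, omega_Bb_mul, ih.1]
        simp only [gam_succ, pow_succ']
        generalize (Aa - Bb) ^ k = p
        generalize (-X : NCR) ^ k = e
        generalize omega f = G
        simp only [mul_add, add_mul, mul_sub, sub_mul, smul_mul_assoc, mul_smul_comm,
          smul_smul, smul_sub, smul_add, mul_assoc, mul_one, one_mul]
        module
      · rw [hz, mul_sub, omega_sub, omega_AaAa_mul, ih.2, omega_AaBb_mul, ih.1]
        simp only [gam_succ, pow_succ']
        generalize (Aa - Bb) ^ k = p
        generalize (-X : NCR) ^ k = e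
        generalize omega f = G
        simp only [Qel, mul_add, add_mul, mul_sub, sub_mul, smul_mul_assoc, mul_smul_comm,
          smul_smul, smul_sub, smul_add, mul_assoc, mul_one, one_mul]
        module

end Aux4
noncomputable section Aux5

/-- Weight of an arbitrary list of positions. -/
def wtL (l : List ℕ) (S : Finset ℕ) : NCPoly :=
  (l.map fun j => if j ∈ S then Bb else Aa - Bb).prod

lemma wtS_eq_wtL (n : ℕ) (S : Finset ℕ) : wtS n S = wtL (List.range n) S := rfl

lemma wtL_nil (S : Finset ℕ) : wtL [] S = 1 := rfl

lemma wtL_cons (j : ℕ) (l : List ℕ) (S : Finset ℕ) :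
    wtL (j :: l) S = (if j ∈ S then Bb else Aa - Bb) * wtL l S := by
  simp [wtL]

lemma wtL_append (l₁ l₂ : List ℕ) (S : Finset ℕ) :
    wtL (l₁ ++ l₂) S = wtL l₁ S * wtL l₂ S := by
  simp [wtL]

lemma wtL_const {l : List ℕ} {S : Finset ℕ} (h : ∀ j ∈ l, j ∉ S) :
    wtL l S = (Aa - Bb) ^ l.length := by
  induction l with
  | nil => rw [wtL_nil, List.length_nil, pow_zero]
  | cons j l ih =>
      rw [wtL_cons, if_neg (h j List.mem_cons_self), List.length_cons, pow_succ',
        ih fun j hj => h j (List.mem_cons_of_mem _ hj)]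

lemma iota_wtS (n : ℕ) (hn : 1 ≤ n) (S : Finset ℕ) :
    iota (wtS n S) = if 0 ∈ S then wtL (List.range' 1 (n - 1)) S else 0 := by
  obtain ⟨m, rfl⟩ : ∃ m, n = m + 1 := ⟨n - 1, by omega⟩
  rw [wtS_eq_wtL, List.range_eq_range', List.range'_succ, wtL_cons, Nat.add_sub_cancel]
  split_ifs with h
  · rw [iota_Bb_mul]
  · rw [iota_AB_mul]

lemma wtL_split (r m : ℕ) (hr : 1 ≤ r) (S : Finset ℕ) (hS : ∀ s ∈ S, r ≤ s) (hrS : r ∈ S) :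
    wtL (List.range' 1 (r - 1 + (1 + m))) (insert 0 S)
      = (Aa - Bb) ^ (r - 1) * (Bb * wtL (List.range' 1 m) (S.image fun s => s - r)) := by
  have h1 : r - 1 + (1 + m) = (1 + m) + (r - 1) := by omega
  rw [← List.range'_append (s := 1) (m := r - 1) (n := 1 + m) (step := 1)]
  rw [wtL_append]
  have e1 : wtL (List.range' 1 (r - 1) 1) (insert 0 S) = (Aa - Bb) ^ (r - 1) := by
    rw [wtL_const, List.length_range']
    intro j hj
    rw [List.mem_range'_1] at hj
    simp only [Finset.mem_insert]
    rintro (rfl | hjS)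
    · omega
    · exact absurd (hS j hjS) (by omega)
  have h2 : 1 + 1 * (r - 1) = r := by omega
  have h3 : 1 + m = m + 1 := by omega
  rw [e1, h2, h3, List.range'_succ, wtL_cons,
    if_pos (Finset.mem_insert_of_mem hrS)]
  congr 2
  have h4 : List.range' (r + 1) m = (List.range' 1 m).map fun x => r + x :=
    (List.map_add_range' (a := r) (s := 1) (n := m) (step := 1)).symm
  rw [h4, wtL, wtL, List.map_map]
  congr 1
  refine List.map_congr_left fun j hj => ?_
  rw [List.mem_range'_1] at hj
  have : (r + j ∈ insert 0 S) ↔ (j ∈ S.image fun s => s - r) := by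
    simp only [Finset.mem_insert, Finset.mem_image]
    constructor
    · rintro (h | h)
      · omega
      · exact ⟨r + j, h, by omega⟩
    · rintro ⟨s, hs, rfl⟩
      have := hS s hs
      right
      have : s - r + r = s := by omega
      rw [show r + (s - r) = s by omega]
      exact hs
  simp only [Function.comp]
  rw [if_congr this rfl rfl]

end Aux5
section Aux6

variable {P : Type*} [Fintype P] [PartialOrder P]

lemma exists_right_cover {u v : P} (h : u < v) : ∃ x, u ≤ x ∧ x ⋖ v := by
  classical
  obtain ⟨x, hx, hmax⟩ := Finset.exists_maximal
    (s := Finset.univ.filter fun x => u ≤ x ∧ x < v) ⟨u, by simp [h, le_refl]⟩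
  simp only [Finset.mem_filter, Finset.mem_univ, true_and] at hx
  refine ⟨x, hx.1, hx.2, fun z hz hzv => ?_⟩
  refine absurd (hmax ?_ hz.le) (not_le_of_gt hz)
  simp only [Finset.mem_filter, Finset.mem_univ, true_and]
  exact ⟨hx.1.trans hz.le, hzv⟩

lemma rk_lt_of_lt (rk : P → ℕ) (hrk_cov : ∀ u v : P, u ⋖ v → rk v = rk u + 1)
    {u v : P} (h : u < v) : rk u < rk v := by
  induction v using WellFoundedLT.induction generalizing u with
  | _ v ih =>
    obtain ⟨x, hux, hxv⟩ := exists_right_cover h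
    rcases eq_or_lt_of_le hux with rfl | hlt
    · rw [hrk_cov _ _ hxv]; omega
    · have h1 := ih x hxv.1 hlt
      rw [hrk_cov _ _ hxv]; omega

lemma rk_le_of_le (rk : P → ℕ) (hrk_cov : ∀ u v : P, u ⋖ v → rk v = rk u + 1)
    {u v : P} (h : u ≤ v) : rk u ≤ rk v := by
  rcases eq_or_lt_of_le h with rfl | hlt
  · exact le_refl _
  · exact (rk_lt_of_lt rk hrk_cov hlt).le

lemma eq_of_le_of_rk_le (rk : P → ℕ) (hrk_cov : ∀ u v : P, u ⋖ v → rk v = rk u + 1)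
    {u v : P} (h : u ≤ v) (hr : rk v ≤ rk u) : u = v := by
  rcases eq_or_lt_of_le h with rfl | hlt
  · rfl
  · exact absurd (rk_lt_of_lt rk hrk_cov hlt) (by omega)

end Aux6
section Aux7

lemma strictMono_cons_iff {P : Type*} [PartialOrder P] {k : ℕ} (x : P) (d : Fin (k + 1) → P) :
    StrictMono (Fin.cons x d : Fin (k + 2) → P) ↔ x < d 0 ∧ StrictMono d := by
  rw [Fin.strictMono_iff_lt_succ, Fin.strictMono_iff_lt_succ]
  constructor
  · intro h
    refine ⟨?_, fun i => ?_⟩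
    · simpa using h 0
    · have := h i.succ
      rwa [← Fin.succ_castSucc, Fin.cons_succ, Fin.cons_succ] at this
  · rintro ⟨h0, h⟩ i
    induction i using Fin.cases with
    | zero => simpa using h0
    | succ j => rw [← Fin.succ_castSucc, Fin.cons_succ, Fin.cons_succ]; exact h j

lemma image_cons_ranks {P : Type*} [DecidableEq P] {k : ℕ} (rkf : P → ℕ) (x : P)
    (d : Fin (k + 1) → P) :
    (Finset.univ.image fun i : Fin (k + 1) =>
        rkf ((Fin.cons x d : Fin (k + 2) → P) i.castSucc))
      = insert (rkf x) (Finset.univ.image fun i : Fin k => rkf (d i.castSucc)) := by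
  classical
  ext y
  simp only [Finset.mem_image, Finset.mem_insert, Finset.mem_univ, true_and]
  constructor
  · rintro ⟨i, rfl⟩
    induction i using Fin.cases with
    | zero => left; rw [Fin.castSucc_zero, Fin.cons_zero]
    | succ j => right; exact ⟨j, by rw [← Fin.succ_castSucc, Fin.cons_succ]⟩
  · rintro (rfl | ⟨j, rfl⟩)
    · exact ⟨0, by rw [Fin.castSucc_zero, Fin.cons_zero]⟩
    · exact ⟨j.succ, by rw [← Fin.succ_castSucc, Fin.cons_succ]⟩

variable {P : Type*} [Fintype P] [PartialOrder P] [BoundedOrder P]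

open Classical in
/-- Dense (indicator) form of `psiTildeFrom`. -/
lemma psiTilde_dense (rk : P → ℕ) (hrk_cov : ∀ u v : P, u ⋖ v → rk v = rk u + 1)
    (w : P) (hw : w < ⊤) :
    psiTildeFrom rk w = ∑ k ∈ Finset.range (Fintype.card P), ∑ c : Fin (k + 1) → P,
      if StrictMono c ∧ c (Fin.last k) = ⊤ ∧ c 0 = w
      then wtL (List.range' 1 (rk (⊤ : P) - rk w - 1))
        (Finset.univ.image fun i : Fin k => rk (c i.castSucc) - rk w)
      else 0 := by
  have hrw : rk w < rk (⊤ : P) := rk_lt_of_lt rk hrk_cov hw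
  unfold psiTildeFrom psiFrom
  rw [iota_eq_hom, map_sum]
  refine Finset.sum_congr rfl fun k _ => ?_
  rw [map_sum, Finset.sum_filter]
  refine Finset.sum_congr rfl fun c _ => ?_
  rw [← iota_eq_hom]
  by_cases h1 : StrictMono c
  swap
  · simp only [h1, false_and, if_false]
  by_cases h2 : c (Fin.last k) = ⊤
  swap
  · simp only [h1, h2, true_and, false_and, if_false]
  by_cases h3 : c 0 = w
  · have hk : k ≠ 0 := by
      intro hk0
      subst hk0
      rw [show Fin.last 0 = 0 from rfl, h3] at h2
      exact hw.ne h2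
    have hle : w ≤ c 0 := le_of_eq h3.symm
    have h0S : 0 ∈ Finset.univ.image fun i : Fin k => rk (c i.castSucc) - rk w := by
      refine Finset.mem_image.mpr ⟨⟨0, Nat.pos_of_ne_zero hk⟩, Finset.mem_univ _, ?_⟩
      have : (Fin.castSucc (⟨0, Nat.pos_of_ne_zero hk⟩ : Fin k)) = (0 : Fin (k + 1)) := by
        ext; rfl
      rw [this, h3]
      omega
    rw [if_pos ⟨h1, h2, hle⟩, if_pos ⟨h1, h2, h3⟩, iota_wtS _ (by omega), if_pos h0S]
  · by_cases h4 : w ≤ c 0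
    · have h0S : 0 ∉ Finset.univ.image fun i : Fin k => rk (c i.castSucc) - rk w := by
        simp only [Finset.mem_image, Finset.mem_univ, true_and, not_exists]
        intro i hi
        have hwc : w < c i.castSucc := by
          refine lt_of_le_of_ne (h4.trans (h1.monotone (Fin.zero_le i.castSucc))) fun he => ?_
          exact h3 (le_antisymm ((h1.monotone (Fin.zero_le i.castSucc)).trans
            (le_of_eq he.symm)) h4)
        have := rk_lt_of_lt rk hrk_cov hwc
        omega
      rw [if_pos ⟨h1, h2, h4⟩, if_neg (fun hc => h3 hc.2.2), iota_wtS _ (by omega), if_neg h0S]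
    · rw [if_neg (fun hc => h4 hc.2.2), if_neg (fun hc => h3 hc.2.2)]

end Aux7
noncomputable section Aux8

variable {P : Type*} [Fintype P] [PartialOrder P] [BoundedOrder P]

open Classical in
/-- Chains starting at `⊥`, dense form. -/
def csA (rk : P → ℕ) (n k : ℕ) : NCPoly :=
  ∑ c : Fin (k + 1) → P,
    if StrictMono c ∧ c (Fin.last k) = (⊤ : P) ∧ c 0 = ⊥
    then wtL (List.range' 1 (n - 1)) (Finset.univ.image fun i : Fin k => rk (c i.castSucc))
    else 0

open Classical in
/-- Chains with first element `> ⊥`, dense form. -/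
def csB (rk : P → ℕ) (n k : ℕ) : NCPoly :=
  ∑ d : Fin (k + 1) → P,
    if StrictMono d ∧ d (Fin.last k) = (⊤ : P) ∧ ⊥ < d 0
    then wtL (List.range' 1 (n - 1))
      (insert 0 (Finset.univ.image fun i : Fin k => rk (d i.castSucc)))
    else 0

open Classical in
/-- Chains with first element `⊤`, dense form. -/
def csB1 (rk : P → ℕ) (n k : ℕ) : NCPoly :=
  ∑ d : Fin (k + 1) → P,
    if StrictMono d ∧ d (Fin.last k) = (⊤ : P) ∧ d 0 = ⊤
    then wtL (List.range' 1 (n - 1))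
      (insert 0 (Finset.univ.image fun i : Fin k => rk (d i.castSucc)))
    else 0

open Classical in
/-- Chains with first element strictly between `⊥` and `⊤`, dense form. -/
def csB2 (rk : P → ℕ) (n k : ℕ) : NCPoly :=
  ∑ d : Fin (k + 1) → P,
    if StrictMono d ∧ d (Fin.last k) = (⊤ : P) ∧ ⊥ < d 0 ∧ d 0 < ⊤
    then wtL (List.range' 1 (n - 1))
      (insert 0 (Finset.univ.image fun i : Fin k => rk (d i.castSucc)))
    else 0

open Classical in
/-- Chains with first element equal to `w`, dense form, shifted weights. -/
def csW (rk : P → ℕ) (n k : ℕ) (w : P) : NCPoly :=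
  ∑ d : Fin (k + 1) → P,
    if StrictMono d ∧ d (Fin.last k) = (⊤ : P) ∧ d 0 = w
    then wtL (List.range' 1 (n - rk w - 1))
      (Finset.univ.image fun i : Fin k => rk (d i.castSucc) - rk w)
    else 0

lemma psiTilde_eq_sum_csA (rk : P → ℕ) (n : ℕ)
    (hrk_bot : rk (⊥ : P) = 0) (hrk_top : rk (⊤ : P) = n)
    (hrk_cov : ∀ u v : P, u ⋖ v → rk v = rk u + 1) (hbt : (⊥ : P) < ⊤) :
    psiTildeFrom rk (⊥ : P) = ∑ k ∈ Finset.range (Fintype.card P), csA rk n k := by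
  classical
  have := psiTilde_dense rk hrk_cov (⊥ : P) hbt
  simp only [hrk_bot, hrk_top, Nat.sub_zero] at this
  rw [this]
  rfl

lemma psiTilde_eq_sum_csW (rk : P → ℕ) (n : ℕ) (hrk_top : rk (⊤ : P) = n)
    (hrk_cov : ∀ u v : P, u ⋖ v → rk v = rk u + 1) (w : P) (hw : w < ⊤) :
    psiTildeFrom rk w = ∑ k ∈ Finset.range (Fintype.card P), csW rk n k w := by
  classical
  have := psiTilde_dense rk hrk_cov w hw
  simp only [hrk_top] at this
  rw [this]
  rfl

lemma csA_zero (rk : P → ℕ) (n : ℕ) (hbt : (⊥ : P) < ⊤) : csA rk n 0 = 0 := by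
  classical
  refine Finset.sum_eq_zero fun c _ => if_neg fun hc => ?_
  have h2 := hc.2.1
  rw [show Fin.last 0 = 0 from rfl, hc.2.2] at h2
  exact hbt.ne h2

lemma csA_large (rk : P → ℕ) (n k : ℕ) (hk : Fintype.card P ≤ k) : csA rk n k = 0 := by
  classical
  refine Finset.sum_eq_zero fun c _ => if_neg fun hc => ?_
  have := Fintype.card_le_of_injective c hc.1.injective
  simp only [Fintype.card_fin] at this
  omega

lemma csA_succ (rk : P → ℕ) (n k : ℕ) (hrk_bot : rk (⊥ : P) = 0) :
    csA rk n (k + 1) = csB rk n k := by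
  classical
  unfold csA csB
  rw [← Fintype.sum_equiv (Fin.consEquiv fun _ : Fin (k + 2) => P)
    (fun p : P × (Fin (k + 1) → P) =>
      if StrictMono (Fin.cons p.1 p.2 : Fin (k + 2) → P) ∧
          (Fin.cons p.1 p.2 : Fin (k + 2) → P) (Fin.last (k + 1)) = (⊤ : P) ∧
          (Fin.cons p.1 p.2 : Fin (k + 2) → P) 0 = ⊥
      then wtL (List.range' 1 (n - 1))
        (Finset.univ.image fun i : Fin (k + 1) =>
          rk ((Fin.cons p.1 p.2 : Fin (k + 2) → P) i.castSucc))
      else 0)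
    _ (fun p => rfl)]
  rw [Fintype.sum_prod_type]
  rw [Finset.sum_eq_single (⊥ : P)]
  · refine Finset.sum_congr rfl fun d _ => ?_
    rw [image_cons_ranks rk ⊥ d, hrk_bot]
    refine if_congr ?_ rfl rfl
    rw [strictMono_cons_iff, Fin.cons_zero, ← Fin.succ_last, Fin.cons_succ]
    constructor
    · rintro ⟨⟨h1, h2⟩, h3, -⟩; exact ⟨h2, h3, h1⟩
    · rintro ⟨h2, h3, h1⟩; exact ⟨⟨h1, h2⟩, h3, rfl⟩
  · intro x _ hx
    refine Finset.sum_eq_zero fun d _ => if_neg fun hc => ?_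
    rw [Fin.cons_zero] at hc
    exact hx hc.2.2
  · intro h
    exact absurd (Finset.mem_univ _) h

end Aux8
noncomputable section Aux9

variable {P : Type*} [Fintype P] [PartialOrder P] [BoundedOrder P]

lemma csB_split (rk : P → ℕ) (n : ℕ) (hbt : (⊥ : P) < ⊤) (k : ℕ) :
    csB rk n k = csB1 rk n k + csB2 rk n k := by
  classical
  unfold csB csB1 csB2
  rw [← Finset.sum_add_distrib]
  refine Finset.sum_congr rfl fun d _ => ?_
  by_cases h1 : StrictMono d ∧ d (Fin.last k) = (⊤ : P)
  · by_cases h2 : d 0 = ⊤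
    · rw [if_pos ⟨h1.1, h1.2, h2 ▸ hbt⟩, if_pos ⟨h1.1, h1.2, h2⟩,
        if_neg fun hc => absurd (h2 ▸ hc.2.2.2) (lt_irrefl _), add_zero]
    · have hlt : d 0 < ⊤ := lt_of_le_of_ne le_top h2
      by_cases h3 : ⊥ < d 0
      · rw [if_pos ⟨h1.1, h1.2, h3⟩, if_neg fun hc => h2 hc.2.2,
          if_pos ⟨h1.1, h1.2, h3, hlt⟩, zero_add]
      · rw [if_neg fun hc => h3 hc.2.2, if_neg fun hc => h2 hc.2.2,
          if_neg fun hc => h3 hc.2.2.1, add_zero]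
  · rw [if_neg fun hc => h1 ⟨hc.1, hc.2.1⟩, if_neg fun hc => h1 ⟨hc.1, hc.2.1⟩,
      if_neg fun hc => h1 ⟨hc.1, hc.2.1⟩, add_zero]

lemma csB1_zero_val (rk : P → ℕ) (n : ℕ) :
    csB1 rk n 0 = (Aa - Bb) ^ (n - 1) := by
  classical
  unfold csB1
  have hv : ∀ d : Fin 1 → P,
      wtL (List.range' 1 (n - 1))
        (insert 0 (Finset.univ.image fun i : Fin 0 => rk (d i.castSucc)))
      = (Aa - Bb) ^ (n - 1) := by
    intro d
    rw [Finset.univ_eq_empty, Finset.image_empty]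
    rw [wtL_const, List.length_range']
    intro j hj hmem
    rw [List.mem_range'_1] at hj
    rcases Finset.mem_insert.mp hmem with h | h
    · omega
    · exact absurd h (Finset.notMem_empty _)
  have hSM1 : StrictMono (fun _ : Fin 1 => (⊤ : P)) := by
    intro i j hij
    have h1 := i.isLt
    have h2 := j.isLt
    rw [Fin.lt_def] at hij
    omega
  rw [Finset.sum_eq_single (fun _ => (⊤ : P))]
  · rw [if_pos ⟨hSM1, rfl, rfl⟩]
    exact hv (fun _ => ⊤)
  · intro d _ hd
    refine if_neg fun hc => hd (funext fun i => ?_)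
    rw [Fin.fin_one_eq_zero i]
    exact hc.2.2
  · intro h
    exact absurd (Finset.mem_univ _) h

lemma csB1_succ (rk : P → ℕ) (n k : ℕ) : csB1 rk n (k + 1) = 0 := by
  classical
  refine Finset.sum_eq_zero fun d _ => if_neg fun hc => ?_
  have := hc.1 (show (0 : Fin (k + 2)) < Fin.last (k + 1) from Fin.last_pos)
  rw [hc.2.1, hc.2.2] at this
  exact lt_irrefl _ this

lemma sum_csB1 (rk : P → ℕ) (n : ℕ) (hN : 1 ≤ Fintype.card P) :
    ∑ k ∈ Finset.range (Fintype.card P), csB1 rk n k = (Aa - Bb) ^ (n - 1) := by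
  classical
  have h : ∀ k, csB1 rk n k = if k = 0 then (Aa - Bb) ^ (n - 1) else 0 := by
    intro k
    cases k with
    | zero => rw [csB1_zero_val, if_pos rfl]
    | succ m => rw [csB1_succ, if_neg (Nat.succ_ne_zero m)]
  simp only [h]
  rw [Finset.sum_ite_eq' _ 0 fun _ => (Aa - Bb) ^ (n - 1), if_pos (Finset.mem_range.mpr hN)]

lemma wt_value (rk : P → ℕ) (n : ℕ)
    (hrk_bot : rk (⊥ : P) = 0) (hrk_top : rk (⊤ : P) = n)
    (hrk_cov : ∀ u v : P, u ⋖ v → rk v = rk u + 1)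
    {k : ℕ} (d : Fin (k + 1) → P) (hSM : StrictMono d) (hlast : d (Fin.last k) = ⊤)
    (w : P) (hd0 : d 0 = w) (hw1 : (⊥ : P) < w) (hw2 : w < ⊤) :
    wtL (List.range' 1 (n - 1))
        (insert 0 (Finset.univ.image fun i : Fin k => rk (d i.castSucc)))
      = (Aa - Bb) ^ (rk w - 1) *
        (Bb * wtL (List.range' 1 (n - rk w - 1))
          (Finset.univ.image fun i : Fin k => rk (d i.castSucc) - rk w)) := by
  classical
  have hr1 : 1 ≤ rk w := by have := rk_lt_of_lt rk hrk_cov hw1; omega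
  have hrn : rk w < n := by have := rk_lt_of_lt rk hrk_cov hw2; omega
  have hk0 : 0 < k := by
    rcases Nat.eq_zero_or_pos k with rfl | h
    · rw [show Fin.last 0 = 0 from rfl, hd0] at hlast
      exact absurd hlast hw2.ne
    · exact h
  have hS : ∀ s ∈ Finset.univ.image fun i : Fin k => rk (d i.castSucc), rk w ≤ s := by
    intro s hs
    obtain ⟨i, -, rfl⟩ := Finset.mem_image.mp hs
    refine rk_le_of_le rk hrk_cov ?_
    rw [← hd0]
    exact hSM.monotone (Fin.zero_le _)
  have hrS : rk w ∈ Finset.univ.image fun i : Fin k => rk (d i.castSucc) := by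
    refine Finset.mem_image.mpr ⟨⟨0, hk0⟩, Finset.mem_univ _, ?_⟩
    rw [show Fin.castSucc (⟨0, hk0⟩ : Fin k) = (0 : Fin (k + 1)) from by ext; rfl, hd0]
  have harr : n - 1 = rk w - 1 + (1 + (n - rk w - 1)) := by omega
  rw [harr, wtL_split (rk w) (n - rk w - 1) hr1 _ hS hrS, Finset.image_image]
  rfl

open Classical in
lemma sum_csB2 (rk : P → ℕ) (n : ℕ)
    (hrk_bot : rk (⊥ : P) = 0) (hrk_top : rk (⊤ : P) = n)
    (hrk_cov : ∀ u v : P, u ⋖ v → rk v = rk u + 1) :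
    ∑ k ∈ Finset.range (Fintype.card P), csB2 rk n k
      = ∑ w ∈ Finset.univ.filter fun w : P => ⊥ < w ∧ w < ⊤,
          (Aa - Bb) ^ (rk w - 1) * (Bb * psiTildeFrom rk w) := by
  classical
  have step1 : ∀ k, csB2 rk n k = ∑ w : P, ∑ d : Fin (k + 1) → P,
      if StrictMono d ∧ d (Fin.last k) = (⊤ : P) ∧ d 0 = w ∧ (⊥ : P) < w ∧ w < ⊤
      then wtL (List.range' 1 (n - 1))
        (insert 0 (Finset.univ.image fun i : Fin k => rk (d i.castSucc)))
      else 0 := by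
    intro k
    unfold csB2
    rw [← Finset.sum_fiberwise Finset.univ (fun d : Fin (k + 1) → P => d 0)]
    refine Finset.sum_congr rfl fun w _ => ?_
    rw [Finset.sum_filter]
    refine Finset.sum_congr rfl fun d _ => ?_
    by_cases hdw : d 0 = w
    · subst hdw
      rw [if_pos rfl]
      refine if_congr ?_ rfl rfl
      constructor
      · rintro ⟨a, b, c1, c2⟩; exact ⟨a, b, rfl, c1, c2⟩
      · rintro ⟨a, b, -, c1, c2⟩; exact ⟨a, b, c1, c2⟩
    · rw [if_neg hdw, if_neg fun hc => hdw hc.2.2.1]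
  simp only [step1]
  rw [Finset.sum_comm, Finset.sum_filter]
  refine Finset.sum_congr rfl fun w _ => ?_
  by_cases hw : (⊥ : P) < w ∧ w < ⊤
  · rw [if_pos hw, psiTilde_eq_sum_csW rk n hrk_top hrk_cov w hw.2]
    unfold csW
    simp only [Finset.mul_sum, mul_ite, mul_zero]
    refine Finset.sum_congr rfl fun k _ => Finset.sum_congr rfl fun d _ => ?_
    by_cases hc : StrictMono d ∧ d (Fin.last k) = (⊤ : P) ∧ d 0 = w
    · rw [if_pos ⟨hc.1, hc.2.1, hc.2.2, hw.1, hw.2⟩, if_pos hc,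
        wt_value rk n hrk_bot hrk_top hrk_cov d hc.1 hc.2.1 w hc.2.2 hw.1 hw.2]
    · rw [if_neg fun h => hc ⟨h.1, h.2.1, h.2.2.1⟩, if_neg hc]
  · rw [if_neg hw]
    exact Finset.sum_eq_zero fun k _ => Finset.sum_eq_zero fun d _ =>
      if_neg fun hc => hw ⟨hc.2.2.2.1, hc.2.2.2.2⟩

open Classical in
lemma psiTilde_rec (rk : P → ℕ) (n : ℕ) (hn : 1 ≤ n)
    (hrk_bot : rk (⊥ : P) = 0) (hrk_top : rk (⊤ : P) = n)
    (hrk_cov : ∀ u v : P, u ⋖ v → rk v = rk u + 1) :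
    psiTildeFrom rk (⊥ : P) = (Aa - Bb) ^ (n - 1) +
      ∑ w ∈ Finset.univ.filter fun w : P => ⊥ < w ∧ w < ⊤,
        (Aa - Bb) ^ (rk w - 1) * (Bb * psiTildeFrom rk w) := by
  classical
  have hbt : (⊥ : P) < ⊤ := by
    refine lt_of_le_of_ne bot_le fun h => ?_
    rw [h, hrk_top] at hrk_bot
    omega
  have hN : 1 ≤ Fintype.card P := Fintype.card_pos_iff.mpr ⟨⊥⟩
  rw [psiTilde_eq_sum_csA rk n hrk_bot hrk_top hrk_cov hbt]
  have h1 : ∑ k ∈ Finset.range (Fintype.card P), csA rk n k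
      = ∑ k ∈ Finset.range (Fintype.card P), csA rk n (k + 1) := by
    have e1 := Finset.sum_range_succ (fun k => csA rk n k) (Fintype.card P)
    have e2 := Finset.sum_range_succ' (fun k => csA rk n k) (Fintype.card P)
    rw [csA_large rk n _ (le_refl _), add_zero] at e1
    rw [csA_zero rk n hbt, add_zero] at e2
    rw [← e1, e2]
  rw [h1]
  have h2 : ∀ k, csA rk n (k + 1) = csB1 rk n k + csB2 rk n k := fun k => by
    rw [csA_succ rk n k hrk_bot, csB_split rk n hbt k]
  simp only [h2]
  rw [Finset.sum_add_distrib, sum_csB1 rk n hN, sum_csB2 rk n hrk_bot hrk_top hrk_cov]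

end Aux9
open Classical in
/-- For a finite, graded, bounded poset of rank `n ≥ 1`,
`(1+y)·ω(Ψ̃_P) = (1-(-y)^n)·(a-b)^{n-1} + (1+y)·∑_{0̂<w<1̂} (a-b)^{rk w - 1}(b - (-y)^{rk w}·a)·ω(Ψ̃_{[w,1̂]})`. -/
theorem omega_psiTilde_recursion
    {P : Type*} [Fintype P] [PartialOrder P] [BoundedOrder P]
    (rk : P → ℕ) (n : ℕ) (hn : 1 ≤ n)
    (hrk_bot : rk (⊥ : P) = 0) (hrk_top : rk (⊤ : P) = n)
    (hrk_cov : ∀ u v : P, u ⋖ v → rk v = rk u + 1) :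
    (1 + X : Polynomial ℤ) • omega (psiTildeFrom rk (⊥ : P)) =
      ((1 : Polynomial ℤ) - (-X) ^ n) • (Aa - Bb) ^ (n - 1) +
        (1 + X : Polynomial ℤ) •
          ∑ w ∈ Finset.univ.filter fun w : P => ⊥ < w ∧ w < ⊤,
            (Aa - Bb) ^ (rk w - 1) * (Bb - ((-X : Polynomial ℤ) ^ rk w) • Aa) *
              omega (psiTildeFrom rk w) := by
  classical
  rw [psiTilde_rec rk n hn hrk_bot hrk_top hrk_cov, omega_add, (keyG (n - 1)).1,
    omega_eq_hom, map_sum]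
  have hterm : ∀ w ∈ Finset.univ.filter fun w : P => ⊥ < w ∧ w < ⊤,
      omegaHom ((Aa - Bb) ^ (rk w - 1) * (Bb * psiTildeFrom rk w))
        = (Aa - Bb) ^ (rk w - 1) *
          ((Bb - ((-X : NCR) ^ rk w) • Aa) * omega (psiTildeFrom rk w)) := by
    intro w hw
    simp only [Finset.mem_filter, Finset.mem_univ, true_and] at hw
    have hr1 : 1 ≤ rk w := by
      have := rk_lt_of_lt rk hrk_cov hw.1
      omega
    rw [← omega_eq_hom, (keyL (rk w - 1) (psiTildeFrom rk w)).1,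
      show rk w - 1 + 1 = rk w from by omega]
  rw [Finset.sum_congr rfl hterm, smul_add]
  refine congrArg₂ (HAdd.hAdd : NCPoly → NCPoly → NCPoly) ?_ ?_
  · rw [smul_smul, one_add_X_mul_gam, show n - 1 + 1 = n from by omega]
  · rw [Finset.smul_sum, Finset.smul_sum]
    exact Finset.sum_congr rfl fun w _ => by rw [mul_assoc]
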